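/- Let c, s, L, E, I, A, A*, G > 0 be reals, let a be a real with 1 < a < 16, let u, v > 1 be reals with u = v and E·A·u = G·A*·v, and let x₀ ∈ [0,1). Then the axial and shear contributions to H(P,x₀) cancel identically, and as P → ∞ the horizontal displacements H(P,x₀) converge to (20·c·s·L³/(3·E·I))·( 1/(16 − a) − (2/a)·C_{a/16}(x₀) ), where C_{a/16}(x₀) = Σ_{k=1}^∞ ρ_k(x₀) (a/16)^k. -/

import Mathlib

open Filter intervalIntegral

/-- The `k`-th binary digit of `x ∈ [0,1)`: ρ_k(x) = ⌊2^k x⌋ − 2⌊2^{k−1} x⌋. -/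
noncomputable def binDigit (k : ℕ) (x : ℝ) : ℤ := ⌊(2:ℝ) ^ k * x⌋ - 2 * ⌊(2:ℝ) ^ (k - 1) * x⌋

/-- The series C_t(x) = Σ_{k=1}^∞ ρ_k(x) t^k: the (rescaled) inverse β-Cantor function. -/
noncomputable def Cinf (t x : ℝ) : ℝ := ∑' k : ℕ, (binDigit (k + 1) x : ℝ) * t ^ (k + 1)

/-- Horizontal displacement per unit load of the end node located at `x₀` in a binary tree
structure with `P` levels, from the Principle of Virtual Work (bending + axial + shear). -/
noncomputable def Hdisp (c s L E I A A' G a u v x₀ : ℝ) (P : ℕ) : ℝ :=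
  (∑ i ∈ Finset.Icc 1 P, (a ^ (i - 1) / (E * I)) *
      ∫ x in (0:ℝ)..(L * 2 ^ ((1:ℤ) - (i:ℤ))),
        (s * L * (2 ^ ((2:ℤ) - (i:ℤ)) - 2 ^ ((1:ℤ) - (P:ℤ))) - s * x) *
          (1 - 2 * (binDigit i x₀ : ℝ)) *
          (c * 2 ^ (-(i:ℤ)) * (L * 2 ^ ((1:ℤ) - (i:ℤ)) - x))) +
  (∑ i ∈ Finset.Icc 1 P,
      c * s * (2 * (binDigit i x₀ : ℝ) - 1) * 2 ^ (-(i:ℤ)) * L * 2 ^ ((1:ℤ) - (i:ℤ)) *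
        u ^ (i - 1) / (E * A)) +
  (∑ i ∈ Finset.Icc 1 P,
      c * s * (1 - 2 * (binDigit i x₀ : ℝ)) * 2 ^ (-(i:ℤ)) * L * 2 ^ ((1:ℤ) - (i:ℤ)) *
        v ^ (i - 1) / (G * A'))

lemma digit01 (y : ℝ) : ⌊2*y⌋ - 2*⌊y⌋ = 0 ∨ ⌊2*y⌋ - 2*⌊y⌋ = 1 := by
  have h1 : 2*⌊y⌋ ≤ ⌊2*y⌋ :=
    calc (2:ℤ)*⌊y⌋ = ⌊((2*⌊y⌋ : ℤ) : ℝ)⌋ := (Int.floor_intCast _).symm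
    _ ≤ ⌊2*y⌋ := Int.floor_le_floor (by push_cast; linarith [Int.floor_le y])
  have h2 : ⌊2*y⌋ < 2*⌊y⌋ + 2 :=
    Int.floor_lt.mpr (by push_cast; linarith [Int.lt_floor_add_one y])
  omega

lemma binDigit01 (k : ℕ) (hk : 1 ≤ k) (x : ℝ) :
    binDigit k x = 0 ∨ binDigit k x = 1 := by
  have h : (2:ℝ)^k * x = 2 * ((2:ℝ)^(k-1) * x) := by
    rw [← mul_assoc, ← pow_succ']
    congr 2
    omega
  rw [binDigit, h]
  exact digit01 _

lemma integral_lin (K s D m ℓ : ℝ) :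
    ∫ x in (0:ℝ)..ℓ, (K - s*x) * D * (m * (ℓ - x)) = D * m * (K*ℓ^2/2 - s*ℓ^3/6) := by
  have h : ∀ x : ℝ, (K - s*x) * D * (m * (ℓ - x))
      = D*m*K*ℓ + (-(D*m*(K + s*ℓ)))*x + (D*m*s)*x^2 := by intro x; ring
  simp only [h]
  rw [intervalIntegral.integral_add (((_root_.intervalIntegrable_const).add
        ((intervalIntegrable_id).const_mul _))) ((intervalIntegrable_pow 2).const_mul _),
    intervalIntegral.integral_add (_root_.intervalIntegrable_const)
      ((intervalIntegrable_id).const_mul _),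
    intervalIntegral.integral_const, intervalIntegral.integral_const_mul,
    intervalIntegral.integral_const_mul, integral_id, integral_pow]
  simp only [smul_eq_mul]; push_cast
  ring

/-- When `u = v` and `E·A·u = G·A*·v`, the axial and shear contributions to the horizontal
displacement cancel identically, and the horizontal displacements of the end nodes of the
infinite binary tree are given by an inverse β-Cantor function. -/
theorem horizontal_displacement_cancellation (c s L E I A A' G a u v : ℝ)
    (hc : 0 < c) (hs : 0 < s) (hL : 0 < L) (hE : 0 < E) (hI : 0 < I)
    (hA : 0 < A) (hA' : 0 < A') (hG : 0 < G)
    (ha1 : 1 < a) (ha16 : a < 16) (hu1 : 1 < u) (hv1 : 1 < v)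
    (huv : u = v) (hEA : E * A * u = G * A' * v)
    (x₀ : ℝ) (hx₀ : x₀ ∈ Set.Ico (0:ℝ) 1) :
    (∀ P : ℕ,
      (∑ i ∈ Finset.Icc 1 P,
          c * s * (2 * (binDigit i x₀ : ℝ) - 1) * 2 ^ (-(i:ℤ)) * L * 2 ^ ((1:ℤ) - (i:ℤ)) *
            u ^ (i - 1) / (E * A)) +
      (∑ i ∈ Finset.Icc 1 P,
          c * s * (1 - 2 * (binDigit i x₀ : ℝ)) * 2 ^ (-(i:ℤ)) * L * 2 ^ ((1:ℤ) - (i:ℤ)) *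
            v ^ (i - 1) / (G * A')) = 0) ∧
    Tendsto (fun P : ℕ => Hdisp c s L E I A A' G a u v x₀ P) atTop
      (nhds ((20 * c * s * L ^ 3 / (3 * E * I)) *
        (1 / (16 - a) - (2 / a) * Cinf (a / 16) x₀))) := by
  subst huv
  have hGA : G * A' = E * A :=
    (mul_right_cancel₀ (by positivity : u ≠ 0) hEA).symm
  have hcancel : ∀ P : ℕ,
      (∑ i ∈ Finset.Icc 1 P,
          c * s * (2 * (binDigit i x₀ : ℝ) - 1) * 2 ^ (-(i:ℤ)) * L * 2 ^ ((1:ℤ) - (i:ℤ)) *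
            u ^ (i - 1) / (E * A)) +
      (∑ i ∈ Finset.Icc 1 P,
          c * s * (1 - 2 * (binDigit i x₀ : ℝ)) * 2 ^ (-(i:ℤ)) * L * 2 ^ ((1:ℤ) - (i:ℤ)) *
            u ^ (i - 1) / (G * A')) = 0 := by
    intro P
    rw [hGA, ← Finset.sum_add_distrib]
    apply Finset.sum_eq_zero
    intro i _
    ring
  refine ⟨hcancel, ?_⟩
  -- notation
  set w : ℕ → ℝ := fun i => 1 - 2 * (binDigit i x₀ : ℝ) with hw
  have hwabs : ∀ i, 1 ≤ i → |w i| = 1 := by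
    intro i hi
    rcases binDigit01 i hi x₀ with h | h <;> simp [hw, h] <;> norm_num
  have ha0 : (0:ℝ) < a := by linarith
  have hE0 : E ≠ 0 := hE.ne'
  have hI0 : I ≠ 0 := hI.ne'
  have ha0' : a ≠ 0 := ha0.ne'
  -- rewrite Hdisp in closed form
  have hb : ∀ P : ℕ, Hdisp c s L E I A A' G a u u x₀ P
      = (20*c*s*L^3/(3*a*E*I)) * (∑ i ∈ Finset.Icc 1 P, w i * (a/16)^i)
        - (4*c*s*L^3/(a*E*I)) * ((1/2:ℝ)^P * ∑ i ∈ Finset.Icc 1 P, w i * (a/8)^i) := by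
    intro P
    have hterm : ∀ i ∈ Finset.Icc 1 P,
        (a ^ (i - 1) / (E * I)) *
          ∫ x in (0:ℝ)..(L * 2 ^ ((1:ℤ) - (i:ℤ))),
            (s * L * (2 ^ ((2:ℤ) - (i:ℤ)) - 2 ^ ((1:ℤ) - (P:ℤ))) - s * x) *
              (1 - 2 * (binDigit i x₀ : ℝ)) *
              (c * 2 ^ (-(i:ℤ)) * (L * 2 ^ ((1:ℤ) - (i:ℤ)) - x))
        = (20*c*s*L^3/(3*a*E*I)) * (w i * (a/16)^i)
          - (4*c*s*L^3/(a*E*I)) * ((1/2:ℝ)^P * (w i * (a/8)^i)) := by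
      intro i hi
      rw [Finset.mem_Icc] at hi
      rw [integral_lin]
      set y : ℝ := ((2:ℝ)^i)⁻¹ with hy
      set z : ℝ := ((2:ℝ)^P)⁻¹ with hz
      have h2i : (2:ℝ) ^ (i:ℕ) ≠ 0 := by positivity
      have h2P : (2:ℝ) ^ (P:ℕ) ≠ 0 := by positivity
      have e1 : (2:ℝ) ^ (-(i:ℤ)) = y := by rw [zpow_neg, zpow_natCast]
      have e2 : (2:ℝ) ^ ((1:ℤ) - (i:ℤ)) = 2 * y := by
        rw [zpow_sub₀ two_ne_zero, zpow_one, zpow_natCast, div_eq_mul_inv]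
      have e3 : (2:ℝ) ^ ((2:ℤ) - (i:ℤ)) = 4 * y := by
        rw [zpow_sub₀ two_ne_zero, zpow_natCast, div_eq_mul_inv]; norm_num [hy]
      have e4 : (2:ℝ) ^ ((1:ℤ) - (P:ℤ)) = 2 * z := by
        rw [zpow_sub₀ two_ne_zero, zpow_one, zpow_natCast, div_eq_mul_inv]
      have h16i : ((16:ℝ))^i = ((2:ℝ)^i)^4 := by
        rw [show (16:ℝ) = 2^4 by norm_num, ← pow_mul, ← pow_mul, Nat.mul_comm]
      have h8i : ((8:ℝ))^i = ((2:ℝ)^i)^3 := by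
        rw [show (8:ℝ) = 2^3 by norm_num, ← pow_mul, ← pow_mul, Nat.mul_comm]
      have e5 : (a/16)^i = a^i * y^4 := by
        rw [div_pow, h16i, hy, inv_pow, div_eq_mul_inv]
      have e6 : (a/8)^i = a^i * y^3 := by
        rw [div_pow, h8i, hy, inv_pow, div_eq_mul_inv]
      have e7 : a ^ (i-1) = a^i / a := by
        rw [eq_div_iff ha0', ← pow_succ]
        congr 1
        omega
      have e8 : (1/2:ℝ)^P = z := by rw [div_pow, one_pow, one_div, hz]
      have hy0 : y ≠ 0 := by positivity
      rw [e1, e2, e3, e4, e5, e6, e7, e8]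
      simp only [hw]
      field_simp
      ring
    rw [Hdisp, add_assoc, hcancel P, add_zero, Finset.sum_congr rfl hterm,
      Finset.sum_sub_distrib]
    congr 1
    · rw [← Finset.mul_sum]
    · rw [Finset.mul_sum, Finset.mul_sum]
      try exact Finset.sum_congr rfl fun i _ => by ring
  -- summability and limits
  set t : ℝ := a / 16 with ht
  have ht0 : 0 < t := by positivity
  have ht1 : t < 1 := by rw [ht]; linarith
  have hgeo : Summable (fun k : ℕ => t ^ (k+1)) := by
    simpa [pow_succ'] using (summable_geometric_of_lt_one ht0.le ht1).mul_left t
  have sum_rho : Summable (fun k : ℕ => (binDigit (k+1) x₀ : ℝ) * t ^ (k+1)) := by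
    apply Summable.of_abs
    apply Summable.of_nonneg_of_le (fun k => abs_nonneg _) _ hgeo
    intro k
    rw [abs_mul, abs_pow, abs_of_pos ht0]
    rcases binDigit01 (k+1) (by omega) x₀ with h | h <;>
      simp [h] <;> positivity
  have sum_g : Summable (fun k : ℕ => w (k+1) * t ^ (k+1)) := by
    apply Summable.of_abs
    apply Summable.of_nonneg_of_le (fun k => abs_nonneg _) _ hgeo
    intro k
    rw [abs_mul, abs_pow, abs_of_pos ht0, hwabs (k+1) (by omega), one_mul]
  have hgsum : ∑' k : ℕ, w (k+1) * t ^ (k+1) = a/(16-a) - 2 * Cinf t x₀ := by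
    have hptw : (fun k : ℕ => w (k+1) * t ^ (k+1))
        = fun k : ℕ => t ^ (k+1) - 2 * ((binDigit (k+1) x₀ : ℝ) * t ^ (k+1)) := by
      funext k; rw [hw]; ring
    rw [hptw, Summable.tsum_sub hgeo (sum_rho.mul_left 2), tsum_mul_left]
    have h1 : ∑' k : ℕ, t ^ (k+1) = a/(16-a) := by
      have : ∑' k : ℕ, t ^ (k+1) = t * ∑' k : ℕ, t ^ k := by
        rw [← tsum_mul_left]
        exact tsum_congr fun k => pow_succ' t k
      rw [this, tsum_geometric_of_lt_one ht0.le ht1, ht]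
      have h16a : (16:ℝ) - a ≠ 0 := by linarith
      field_simp
      try ring
    rw [h1, Cinf]
  have key : ∀ (r : ℝ) (P : ℕ), ∑ i ∈ Finset.Icc 1 P, w i * r^i
      = ∑ k ∈ Finset.range P, w (k+1) * r^(k+1) := by
    intro r P
    rw [← Finset.Ico_add_one_right_eq_Icc, Finset.sum_Ico_eq_sum_range]
    exact Finset.sum_congr rfl fun k _ => by rw [Nat.add_comm]
  have h16 : Tendsto (fun P : ℕ => ∑ i ∈ Finset.Icc 1 P, w i * t^i) atTop
      (nhds (a/(16-a) - 2 * Cinf t x₀)) := by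
    simp only [key t]
    rw [← hgsum]
    exact sum_g.hasSum.tendsto_sum_nat
  -- the shear/correction term tends to zero
  set b : ℝ := a / 8 with hbb
  have hb0 : 0 < b := by positivity
  have hb2 : b < 2 := by rw [hbb]; linarith
  have h8 : Tendsto (fun P : ℕ => (1/2:ℝ)^P * ∑ i ∈ Finset.Icc 1 P, w i * b^i) atTop
      (nhds 0) := by
    have hbound : ∀ P : ℕ, ‖(1/2:ℝ)^P * ∑ i ∈ Finset.Icc 1 P, w i * b^i‖
        ≤ (P:ℝ) * (b/2)^P + (P:ℝ) * (1/2)^P := by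
      intro P
      have hS : |∑ i ∈ Finset.Icc 1 P, w i * b^i| ≤ (P:ℝ) * (b^P + 1) := by
        calc |∑ i ∈ Finset.Icc 1 P, w i * b^i|
            ≤ ∑ i ∈ Finset.Icc 1 P, |w i * b^i| := Finset.abs_sum_le_sum_abs _ _
          _ ≤ ∑ i ∈ Finset.Icc 1 P, (b^P + 1) := by
              apply Finset.sum_le_sum
              intro i hi
              rw [Finset.mem_Icc] at hi
              rw [abs_mul, hwabs i hi.1, one_mul, abs_pow, abs_of_pos hb0]
              rcases le_total b 1 with h | h
              · have : b^i ≤ 1 := pow_le_one₀ hb0.le h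
                have : (0:ℝ) ≤ b^P := by positivity
                linarith
              · have : b^i ≤ b^P := pow_le_pow_right₀ h hi.2
                linarith
          _ = (P:ℝ) * (b^P + 1) := by
              rw [Finset.sum_const, Nat.card_Icc]
              simp only [Nat.add_sub_cancel, nsmul_eq_mul]
        
      have hhalf : (0:ℝ) ≤ (1/2:ℝ)^P := by positivity
      rw [norm_mul, norm_pow, Real.norm_eq_abs, Real.norm_eq_abs]
      rw [abs_of_nonneg (by norm_num : (0:ℝ) ≤ (1/2:ℝ))]
      calc (1/2:ℝ)^P * |∑ i ∈ Finset.Icc 1 P, w i * b^i|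
          ≤ (1/2:ℝ)^P * ((P:ℝ) * (b^P + 1)) := by
            exact mul_le_mul_of_nonneg_left hS hhalf
        _ = (P:ℝ) * (b/2)^P + (P:ℝ) * (1/2)^P := by
            rw [div_pow, div_pow, div_pow, one_pow]
            simp only [hbb, div_pow]; ring
    apply squeeze_zero_norm hbound
    have hA1 : Tendsto (fun P : ℕ => (P:ℝ) * (b/2)^P) atTop (nhds 0) := by
      have : Summable (fun n : ℕ => (n:ℝ)^1 * (b/2)^n) :=
        summable_pow_mul_geometric_of_norm_lt_one 1
          (by rw [Real.norm_eq_abs, abs_of_pos (by positivity)]; linarith)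
      simpa using this.tendsto_atTop_zero
    have hA2 : Tendsto (fun P : ℕ => (P:ℝ) * (1/2:ℝ)^P) atTop (nhds 0) := by
      have : Summable (fun n : ℕ => (n:ℝ)^1 * (1/2:ℝ)^n) :=
        summable_pow_mul_geometric_of_norm_lt_one 1
          (by rw [Real.norm_eq_abs, abs_of_pos (by norm_num : (0:ℝ) < 1/2)]; norm_num)
      simpa using this.tendsto_atTop_zero
    simpa using hA1.add hA2
  -- assemble
  have hlim : Tendsto (fun P : ℕ => Hdisp c s L E I A A' G a u u x₀ P) atTop
      (nhds ((20*c*s*L^3/(3*a*E*I)) * (a/(16-a) - 2 * Cinf t x₀)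
        - (4*c*s*L^3/(a*E*I)) * 0)) := by
    apply Tendsto.congr (fun P => (hb P).symm)
    exact (h16.const_mul _).sub (h8.const_mul _)
  have hval : (20*c*s*L^3/(3*a*E*I)) * (a/(16-a) - 2 * Cinf t x₀)
        - (4*c*s*L^3/(a*E*I)) * 0
      = (20 * c * s * L ^ 3 / (3 * E * I)) *
        (1 / (16 - a) - (2 / a) * Cinf t x₀) := by
    have h16a : (16:ℝ) - a ≠ 0 := by linarith
    rw [mul_zero, sub_zero]
    generalize Cinf t x₀ = X
    field_simp
  rwa [hval] at hlim
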